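/- arXiv:1704.01644 — 2 statements merged into one kernel-verified Lean document; each statement's English description precedes it below -/
import Mathlib

section
/- Let r ≥ 4. The dimension of the eigenspace of M_r associated with the eigenvalue 2^(r−3)·(r − 2), i.e., the kernel of M_r − 2^(r−3)(r−2)·I, is at least r − 1. -/
open Finset

/-- The matrix `M_r`, indexed by subsets `S, T ⊆ [r]`, with entry
`C(|S ∩ T|, 2) + C(|Sᶜ ∩ Tᶜ|, 2)`. -/
def Mmat (r : ℕ) : Matrix (Finset (Fin r)) (Finset (Fin r)) ℝ :=
  fun S T => ((S ∩ T).card.choose 2 : ℝ) + ((Sᶜ ∩ Tᶜ).card.choose 2 : ℝ)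

section aux
variable {α : Type*} [DecidableEq α]

lemma PN (U : Finset α) : ∑ A ∈ U.powerset, (A.card : ℝ) = U.card * 2 ^ U.card / 2 := by
  induction U using Finset.induction_on with
  | empty => simp
  | insert _ _ hx =>
    rename_i x U ih
    rw [Finset.sum_powerset_insert hx]
    have h1 : ∑ A ∈ U.powerset, ((insert x A).card : ℝ)
        = ∑ A ∈ U.powerset, ((A.card : ℝ) + 1) := by
      refine Finset.sum_congr rfl fun A hA => ?_
      rw [Finset.card_insert_of_notMem fun h => hx (Finset.mem_powerset.1 hA h)]
      push_cast; ring
    rw [h1, Finset.sum_add_distrib, ih, Finset.sum_const, Finset.card_powerset,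
      Finset.card_insert_of_notMem hx]
    push_cast; ring

lemma PF (U : Finset α) :
    ∑ A ∈ U.powerset, (A.card.choose 2 : ℝ) = (U.card.choose 2 : ℝ) * 2 ^ U.card / 4 := by
  induction U using Finset.induction_on with
  | empty => simp
  | insert _ _ hx =>
    rename_i x U ih
    rw [Finset.sum_powerset_insert hx]
    have h1 : ∑ A ∈ U.powerset, ((insert x A).card.choose 2 : ℝ)
        = ∑ A ∈ U.powerset, ((A.card.choose 2 : ℝ) + A.card) := by
      refine Finset.sum_congr rfl fun A hA => ?_
      rw [Finset.card_insert_of_notMem fun h => hx (Finset.mem_powerset.1 hA h)]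
      rw [Nat.choose_succ_succ, Nat.choose_one_right]
      push_cast; ring
    rw [h1, Finset.sum_add_distrib, ih, PN, Finset.card_insert_of_notMem hx]
    rw [Nat.choose_succ_succ, Nat.choose_one_right]
    push_cast; ring

lemma sum_powerset_mem (U : Finset α) (i : α) (hi : i ∈ U) (f : Finset α → ℝ) :
    ∑ A ∈ U.powerset, (if i ∈ A then f A else 0)
      = ∑ A ∈ (U.erase i).powerset, f (insert i A) := by
  rw [← Finset.sum_filter]
  refine Finset.sum_bij' (fun A _ => A.erase i) (fun B _ => insert i B) ?_ ?_ ?_ ?_ ?_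
  · intro A hA
    simp only [Finset.mem_filter, Finset.mem_powerset] at hA
    exact Finset.mem_powerset.2 (Finset.erase_subset_erase _ hA.1)
  · intro B hB
    simp only [Finset.mem_powerset] at hB
    refine Finset.mem_filter.2 ⟨Finset.mem_powerset.2 ?_, Finset.mem_insert_self _ _⟩
    exact Finset.insert_subset hi (hB.trans (Finset.erase_subset _ _))
  · intro A hA
    simp only [Finset.mem_filter] at hA
    exact Finset.insert_erase hA.2
  · intro B hB
    simp only [Finset.mem_powerset] at hB
    exact Finset.erase_insert fun h => (Finset.mem_erase.1 (hB h)).1 rfl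
  · intro A hA
    simp only [Finset.mem_filter] at hA
    rw [Finset.insert_erase hA.2]

lemma sum_powerset_compl (U : Finset α) (f : Finset α → ℝ) :
    ∑ A ∈ U.powerset, f A = ∑ A ∈ U.powerset, f (U \ A) := by
  refine Finset.sum_bij' (fun A _ => U \ A) (fun A _ => U \ A) ?_ ?_ ?_ ?_ ?_ <;>
    intro A hA <;> simp only [Finset.mem_powerset] at *
  · exact Finset.sdiff_subset
  · exact Finset.sdiff_subset
  · exact Finset.sdiff_sdiff_eq_self hA
  · exact Finset.sdiff_sdiff_eq_self hA
  · rw [Finset.sdiff_sdiff_eq_self hA]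

lemma PFc (U : Finset α) :
    ∑ B ∈ U.powerset, ((U.card - B.card).choose 2 : ℝ)
      = (U.card.choose 2 : ℝ) * 2 ^ U.card / 4 := by
  rw [sum_powerset_compl U (fun B => ((U.card - B.card).choose 2 : ℝ)), ← PF U]
  refine Finset.sum_congr rfl fun B hB => ?_
  have hBU := Finset.mem_powerset.1 hB
  rw [Finset.card_sdiff_of_subset hBU]
  congr 2
  have := Finset.card_le_card hBU
  omega

end aux

lemma union_inter_left {r : ℕ} {S A B : Finset (Fin r)} (h1 : A ⊆ S) (h2 : B ⊆ Sᶜ) :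
    (A ∪ B) ∩ S = A := by
  ext x
  simp only [Finset.mem_inter, Finset.mem_union]
  constructor
  · rintro ⟨h | h, hs⟩
    · exact h
    · exact absurd hs (Finset.mem_compl.1 (h2 h))
  · exact fun h => ⟨Or.inl h, h1 h⟩

lemma union_inter_right {r : ℕ} {S A B : Finset (Fin r)} (h1 : A ⊆ S) (h2 : B ⊆ Sᶜ) :
    (A ∪ B) ∩ Sᶜ = B := by
  ext x
  simp only [Finset.mem_inter, Finset.mem_union, Finset.mem_compl]
  constructor
  · rintro ⟨h | h, hs⟩
    · exact absurd (h1 h) hs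
    · exact h
  · exact fun h => ⟨Or.inr h, Finset.mem_compl.1 (h2 h)⟩

lemma sum_split {r : ℕ} (S : Finset (Fin r)) (f : Finset (Fin r) → ℝ) :
    ∑ T : Finset (Fin r), f T
      = ∑ A ∈ S.powerset, ∑ B ∈ Sᶜ.powerset, f (A ∪ B) := by
  rw [← Finset.sum_product']
  refine Finset.sum_bij' (fun T _ => (T ∩ S, T ∩ Sᶜ)) (fun p _ => p.1 ∪ p.2) ?_ ?_ ?_ ?_ ?_
  · intro T _
    exact Finset.mem_product.2 ⟨Finset.mem_powerset.2 Finset.inter_subset_right,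
      Finset.mem_powerset.2 Finset.inter_subset_right⟩
  · intro p _; exact Finset.mem_univ _
  · intro T _
    show T ∩ S ∪ T ∩ Sᶜ = T
    rw [← Finset.inter_union_distrib_left, Finset.union_compl, Finset.inter_univ]
  · intro p hp
    obtain ⟨h1, h2⟩ := Finset.mem_product.1 hp
    rw [Finset.mem_powerset] at h1 h2
    show ((p.1 ∪ p.2) ∩ S, (p.1 ∪ p.2) ∩ Sᶜ) = p
    rw [union_inter_left h1 h2, union_inter_right h1 h2]
  · intro T _
    show f T = f (T ∩ S ∪ T ∩ Sᶜ)
    rw [← Finset.inter_union_distrib_left, Finset.union_compl, Finset.inter_univ]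

lemma mapPermCompl {r : ℕ} (σ : Equiv.Perm (Fin r)) (T : Finset (Fin r)) :
    (T.map σ.toEmbedding)ᶜ = Tᶜ.map σ.toEmbedding := by
  ext x
  simp only [Finset.mem_compl, Finset.mem_map_equiv]

lemma swap_fix {r : ℕ} {i j : Fin r} {S : Finset (Fin r)} (h : (i ∈ S ↔ j ∈ S)) :
    S.map (Equiv.swap i j).toEmbedding = S := by
  ext x
  rw [Finset.mem_map_equiv, Equiv.symm_swap]
  by_cases hxi : x = i
  · subst hxi; rw [Equiv.swap_apply_left]; exact h.symm
  by_cases hxj : x = j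
  · subst hxj; rw [Equiv.swap_apply_right]; exact h
  · rw [Equiv.swap_apply_of_ne_of_ne hxi hxj]

lemma row_symm {r : ℕ} (i j : Fin r) (S : Finset (Fin r)) (h : (i ∈ S ↔ j ∈ S)) :
    ∑ T : Finset (Fin r), Mmat r S T * (if i ∈ T then (1:ℝ) else 0)
      = ∑ T : Finset (Fin r), Mmat r S T * (if j ∈ T then (1:ℝ) else 0) := by
  have := Equiv.sum_comp (Equiv.swap i j).finsetCongr
    (fun T => Mmat r S T * (if i ∈ T then (1:ℝ) else 0))
  rw [← this]
  refine Finset.sum_congr rfl fun T _ => ?_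
  have hmem : (i ∈ (Equiv.swap i j).finsetCongr T) = (j ∈ T) := by
    rw [Equiv.finsetCongr_apply, Finset.mem_map_equiv, Equiv.symm_swap,
      Equiv.swap_apply_left]
  have hM : Mmat r S ((Equiv.swap i j).finsetCongr T) = Mmat r S T := by
    unfold Mmat
    rw [Equiv.finsetCongr_apply]
    have h1 : S ∩ T.map (Equiv.swap i j).toEmbedding
        = (S ∩ T).map (Equiv.swap i j).toEmbedding := by
      rw [Finset.map_inter, swap_fix h]
    have h2 : Sᶜ ∩ (T.map (Equiv.swap i j).toEmbedding)ᶜ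
        = (Sᶜ ∩ Tᶜ).map (Equiv.swap i j).toEmbedding := by
      rw [mapPermCompl, Finset.map_inter, swap_fix (by simp [Finset.mem_compl, h] : (i ∈ Sᶜ ↔ j ∈ Sᶜ))]
    rw [h1, h2, Finset.card_map, Finset.card_map]
  rw [hM]
  simp only [hmem]
open Finset

lemma entry_eq {r : ℕ} {S A B : Finset (Fin r)} (h1 : A ⊆ S) (h2 : B ⊆ Sᶜ) :
    Mmat r S (A ∪ B) = (A.card.choose 2 : ℝ) + ((Sᶜ.card - B.card).choose 2 : ℝ) := by
  unfold Mmat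
  have e1 : S ∩ (A ∪ B) = A := by rw [Finset.inter_comm]; exact union_inter_left h1 h2
  have e2 : Sᶜ ∩ (A ∪ B)ᶜ = Sᶜ \ B := by
    ext x
    simp only [Finset.mem_inter, Finset.mem_compl, Finset.mem_sdiff, Finset.mem_union]
    constructor
    · rintro ⟨hs, hab⟩; exact ⟨hs, fun hb => hab (Or.inr hb)⟩
    · rintro ⟨hs, hb⟩
      refine ⟨hs, fun hab => ?_⟩
      rcases hab with h | h
      · exact hs (h1 h)
      · exact hb h
  rw [e1, e2, Finset.card_sdiff_of_subset h2]

lemma row_in {r : ℕ} (S : Finset (Fin r)) (i : Fin r) (hi : i ∈ S) :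
    ∑ T : Finset (Fin r), Mmat r S T * (if i ∈ T then (1:ℝ) else 0)
      = 2 ^ Sᶜ.card * (((S.erase i).card.choose 2 : ℝ) * 2 ^ (S.erase i).card / 4
          + (S.erase i).card * 2 ^ (S.erase i).card / 2)
        + 2 ^ (S.erase i).card * ((Sᶜ.card.choose 2 : ℝ) * 2 ^ Sᶜ.card / 4) := by
  rw [sum_split S]
  have step1 : ∀ A ∈ S.powerset, ∑ B ∈ Sᶜ.powerset, Mmat r S (A ∪ B) * (if i ∈ A ∪ B then (1:ℝ) else 0)
      = (if i ∈ A then ((A.card.choose 2 : ℝ) * 2 ^ Sᶜ.card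
          + (Sᶜ.card.choose 2 : ℝ) * 2 ^ Sᶜ.card / 4) else 0) := by
    intro A hA
    have hAS := Finset.mem_powerset.1 hA
    by_cases hiA : i ∈ A
    · rw [if_pos hiA]
      have : ∀ B ∈ Sᶜ.powerset, Mmat r S (A ∪ B) * (if i ∈ A ∪ B then (1:ℝ) else 0)
          = (A.card.choose 2 : ℝ) + ((Sᶜ.card - B.card).choose 2 : ℝ) := by
        intro B hB
        have hBS := Finset.mem_powerset.1 hB
        rw [entry_eq hAS hBS, if_pos (Finset.mem_union_left _ hiA), mul_one]
      rw [Finset.sum_congr rfl this, Finset.sum_add_distrib, Finset.sum_const,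
        Finset.card_powerset, PFc, nsmul_eq_mul]
      push_cast; ring
    · rw [if_neg hiA]
      refine Finset.sum_eq_zero fun B hB => ?_
      have hBS := Finset.mem_powerset.1 hB
      have : i ∉ A ∪ B := by
        intro h
        rcases Finset.mem_union.1 h with h | h
        · exact hiA h
        · exact Finset.mem_compl.1 (hBS h) hi
      rw [if_neg this, mul_zero]
  rw [Finset.sum_congr rfl step1, sum_powerset_mem S i hi]
  have step2 : ∀ A ∈ (S.erase i).powerset,
      ((insert i A).card.choose 2 : ℝ) * 2 ^ Sᶜ.card + (Sᶜ.card.choose 2 : ℝ) * 2 ^ Sᶜ.card / 4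
      = ((A.card.choose 2 : ℝ) + A.card) * 2 ^ Sᶜ.card
        + (Sᶜ.card.choose 2 : ℝ) * 2 ^ Sᶜ.card / 4 := by
    intro A hA
    have hiA : i ∉ A := fun h => (Finset.mem_erase.1 (Finset.mem_powerset.1 hA h)).1 rfl
    rw [Finset.card_insert_of_notMem hiA, Nat.choose_succ_succ, Nat.choose_one_right]
    push_cast; ring
  rw [Finset.sum_congr rfl step2]
  simp only [add_mul, Finset.sum_add_distrib]
  rw [Finset.sum_const, Finset.card_powerset, ← Finset.sum_mul, ← Finset.sum_mul, PF, PN,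
    nsmul_eq_mul]
  push_cast; ring

lemma row_out {r : ℕ} (S : Finset (Fin r)) (i : Fin r) (hi : i ∉ S) :
    ∑ T : Finset (Fin r), Mmat r S T * (if i ∈ T then (1:ℝ) else 0)
      = 2 ^ (Sᶜ.erase i).card * ((S.card.choose 2 : ℝ) * 2 ^ S.card / 4)
        + 2 ^ S.card * (((Sᶜ.erase i).card.choose 2 : ℝ) * 2 ^ (Sᶜ.erase i).card / 4) := by
  have hic : i ∈ Sᶜ := Finset.mem_compl.2 hi
  have hd1 : (Sᶜ.erase i).card + 1 = Sᶜ.card := Finset.card_erase_add_one hic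
  rw [sum_split S]
  have step1 : ∀ A ∈ S.powerset, ∑ B ∈ Sᶜ.powerset, Mmat r S (A ∪ B) * (if i ∈ A ∪ B then (1:ℝ) else 0)
      = (A.card.choose 2 : ℝ) * 2 ^ (Sᶜ.erase i).card
        + ((Sᶜ.erase i).card.choose 2 : ℝ) * 2 ^ (Sᶜ.erase i).card / 4 := by
    intro A hA
    have hAS := Finset.mem_powerset.1 hA
    have h1 : ∀ B ∈ Sᶜ.powerset, Mmat r S (A ∪ B) * (if i ∈ A ∪ B then (1:ℝ) else 0)
        = (if i ∈ B then ((A.card.choose 2 : ℝ) + ((Sᶜ.card - B.card).choose 2 : ℝ)) else 0) := by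
      intro B hB
      have hBS := Finset.mem_powerset.1 hB
      rw [entry_eq hAS hBS]
      by_cases hiB : i ∈ B
      · rw [if_pos hiB, if_pos (Finset.mem_union_right _ hiB), mul_one]
      · have : i ∉ A ∪ B := by
          intro h
          rcases Finset.mem_union.1 h with h | h
          · exact hi (hAS h)
          · exact hiB h
        rw [if_neg hiB, if_neg this, mul_zero]
    rw [Finset.sum_congr rfl h1, sum_powerset_mem Sᶜ i hic]
    have h2 : ∀ B ∈ (Sᶜ.erase i).powerset,
        (A.card.choose 2 : ℝ) + ((Sᶜ.card - (insert i B).card).choose 2 : ℝ)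
        = (A.card.choose 2 : ℝ) + (((Sᶜ.erase i).card - B.card).choose 2 : ℝ) := by
      intro B hB
      have hiB : i ∉ B := fun h => (Finset.mem_erase.1 (Finset.mem_powerset.1 hB h)).1 rfl
      rw [Finset.card_insert_of_notMem hiB]
      congr 3
      omega
    rw [Finset.sum_congr rfl h2, Finset.sum_add_distrib, Finset.sum_const,
      Finset.card_powerset, PFc, nsmul_eq_mul]
    push_cast; ring
  rw [Finset.sum_congr rfl step1, Finset.sum_add_distrib, Finset.sum_const,
    Finset.card_powerset, ← Finset.sum_mul, PF, nsmul_eq_mul]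
  push_cast; ring
open Finset

lemma row_cross {r : ℕ} (hr : 4 ≤ r) (S : Finset (Fin r)) (i j : Fin r)
    (hi : i ∈ S) (hj : j ∉ S) :
    ∑ T : Finset (Fin r), Mmat r S T * (if i ∈ T then (1:ℝ) else 0)
      - ∑ T : Finset (Fin r), Mmat r S T * (if j ∈ T then (1:ℝ) else 0)
      = 2 ^ (r - 3) * ((r : ℝ) - 2) := by
  rw [row_in S i hi, row_out S j hj]
  set m := (S.erase i).card with hm
  set d := (Sᶜ.erase j).card with hd
  have hs : S.card = m + 1 := (Finset.card_erase_add_one hi).symm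
  have hc : Sᶜ.card = d + 1 := (Finset.card_erase_add_one (Finset.mem_compl.2 hj)).symm
  have hr' : S.card + Sᶜ.card = r := by
    rw [Finset.card_add_card_compl]; simp
  obtain ⟨e, he⟩ : ∃ e, r = e + 4 := ⟨r - 4, by omega⟩
  have hmd : m + d = e + 2 := by omega
  have hr3 : r - 3 = e + 1 := by omega
  rw [hs, hc, hr3, he]
  have hpow : (2:ℝ) ^ m * 2 ^ d = 2 * 2 ^ (e + 1) := by
    rw [← pow_add, hmd]; ring
  have hmdR : (m : ℝ) + d = e + 2 := by exact_mod_cast congrArg Nat.cast hmd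
  rw [Nat.cast_choose_two, Nat.cast_choose_two, Nat.cast_choose_two, Nat.cast_choose_two]
  push_cast
  linear_combination (((m:ℝ) + d) / 2) * hpow + (2:ℝ) ^ (e+1) * hmdR


lemma eigen {r : ℕ} (hr : 4 ≤ r) (i j : Fin r) (S : Finset (Fin r)) :
    ∑ T : Finset (Fin r), Mmat r S T *
        ((if i ∈ T then (1:ℝ) else 0) - (if j ∈ T then (1:ℝ) else 0))
      = 2 ^ (r - 3) * ((r : ℝ) - 2) *
        ((if i ∈ S then (1:ℝ) else 0) - (if j ∈ S then (1:ℝ) else 0)) := by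
  have hsplit : ∑ T : Finset (Fin r), Mmat r S T *
        ((if i ∈ T then (1:ℝ) else 0) - (if j ∈ T then (1:ℝ) else 0))
      = ∑ T : Finset (Fin r), Mmat r S T * (if i ∈ T then (1:ℝ) else 0)
        - ∑ T : Finset (Fin r), Mmat r S T * (if j ∈ T then (1:ℝ) else 0) := by
    rw [← Finset.sum_sub_distrib]
    exact Finset.sum_congr rfl fun T _ => by ring
  rw [hsplit]
  by_cases hiS : i ∈ S <;> by_cases hjS : j ∈ S
  · rw [row_symm i j S (iff_of_true hiS hjS), if_pos hiS, if_pos hjS]; ring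
  · rw [row_cross hr S i j hiS hjS, if_pos hiS, if_neg hjS]; ring
  · have := row_cross hr S j i hjS hiS
    rw [if_neg hiS, if_pos hjS]
    linarith
  · rw [row_symm i j S (iff_of_false hiS hjS), if_neg hiS, if_neg hjS]; ring

/-- For `r ≥ 4`, the dimension of the eigenspace of `M_r` associated with
the eigenvalue `2^(r−3)·(r−2)` is at least `r − 1`. -/
theorem eigenspace_dim_ge_of_large_eigenvalue (r : ℕ) (hr : 4 ≤ r) :
    r - 1 ≤
      Module.finrank ℝ (LinearMap.ker
        (Mmat r - ((2 : ℝ) ^ (r - 3) * ((r : ℝ) - 2)) •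
          (1 : Matrix (Finset (Fin r)) (Finset (Fin r)) ℝ)).mulVecLin) := by
  set c : ℝ := (2 : ℝ) ^ (r - 3) * ((r : ℝ) - 2) with hc
  set N := (Mmat r - c • (1 : Matrix (Finset (Fin r)) (Finset (Fin r)) ℝ)).mulVecLin with hN
  have hr0 : 0 < r := by omega
  let ι : Fin (r - 1) → Fin r := fun k => ⟨k.1 + 1, by omega⟩
  let i0 : Fin r := ⟨0, hr0⟩
  let w : Fin (r - 1) → (Finset (Fin r) → ℝ) := fun k T =>
    (if ι k ∈ T then (1:ℝ) else 0) - (if i0 ∈ T then (1:ℝ) else 0)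
  have hMw : ∀ k, (Mmat r).mulVec (w k) = c • w k := by
    intro k
    funext S
    show ∑ T, Mmat r S T * w k T = c * w k S
    exact eigen hr (ι k) i0 S
  have hker : ∀ k, w k ∈ LinearMap.ker N := by
    intro k
    rw [LinearMap.mem_ker, hN, Matrix.mulVecLin_apply, Matrix.sub_mulVec,
      Matrix.smul_mulVec, Matrix.one_mulVec, hMw k, sub_self]
  let g : Fin (r - 1) → LinearMap.ker N := fun k => ⟨w k, hker k⟩
  have hliw : LinearIndependent ℝ w := by
    rw [Fintype.linearIndependent_iff]
    intro coeffs hsum k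
    have h := congrFun hsum ({ι k} : Finset (Fin r))
    simp only [Finset.sum_apply, Pi.smul_apply, smul_eq_mul, Pi.zero_apply, w] at h
    have hi0 : i0 ∉ ({ι k} : Finset (Fin r)) := by
      rw [Finset.mem_singleton]
      intro hcon
      have := congrArg Fin.val hcon
      simp [i0, ι] at this
    rw [Finset.sum_congr rfl (fun j _ => ?_)] at h
    · rwa [Finset.sum_ite_eq' Finset.univ k coeffs, if_pos (Finset.mem_univ k)] at h
    · show coeffs j * ((if ι j ∈ ({ι k} : Finset (Fin r)) then (1:ℝ) else 0)
          - (if i0 ∈ ({ι k} : Finset (Fin r)) then (1:ℝ) else 0))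
        = if j = k then coeffs j else 0
      rw [if_neg hi0]
      have hmem : (ι j ∈ ({ι k} : Finset (Fin r))) ↔ ι j = ι k := Finset.mem_singleton
      have hinj : (ι j = ι k) ↔ j = k := by
        constructor
        · intro hcon
          have := congrArg Fin.val hcon
          simp only [ι] at this
          exact Fin.ext (by omega)
        · rintro rfl; rfl
      by_cases hjk : j = k
      · rw [if_pos (hmem.2 (hinj.2 hjk)), if_pos hjk]; ring
      · rw [if_neg (fun hh => hjk (hinj.1 (hmem.1 hh))), if_neg hjk]; ring
  have hlig : LinearIndependent ℝ g :=
    LinearIndependent.of_comp (LinearMap.ker N).subtype hliw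
  have := hlig.fintype_card_le_finrank
  simpa using this
end

section
/- Let r ≥ 4. The dimension of the eigenspace of M_r associated with the eigenvalue 2^(r−3), i.e., the kernel of M_r − 2^(r−3)·I, is at least C(r, 2) − 1. -/
open Finset

/-- The character `χ_A(S) = (-1)^{|A ∩ S|}`. -/
noncomputable def chi {r : ℕ} (A S : Finset (Fin r)) : ℝ := (-1) ^ (A ∩ S).card

lemma neg_one_pow_symmDiff {r : ℕ} (B : Finset (Fin r)) (a : Fin r) :
    ((-1 : ℝ)) ^ (symmDiff B {a}).card = -(-1) ^ B.card := by
  by_cases h : a ∈ B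
  · have h1 : symmDiff B {a} = B.erase a := by
      ext x
      simp [Finset.mem_symmDiff, Finset.mem_erase]
      constructor
      · rintro (⟨hx, hxa⟩ | ⟨rfl, hx⟩)
        · exact ⟨hxa, hx⟩
        · exact absurd h hx
      · rintro ⟨hxa, hx⟩; exact Or.inl ⟨hx, hxa⟩
    have h2 : B.card = (B.erase a).card + 1 := (Finset.card_erase_add_one h).symm
    rw [h1, h2, pow_succ]
    ring
  · have h1 : symmDiff B {a} = insert a B := by
      ext x
      simp [Finset.mem_symmDiff, Finset.mem_insert]
      constructor
      · rintro (⟨hx, hxa⟩ | ⟨rfl, hx⟩)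
        · exact Or.inr hx
        · exact Or.inl rfl
      · rintro (rfl | hx)
        · exact Or.inr ⟨rfl, h⟩
        · exact Or.inl ⟨hx, fun hxa => h (hxa ▸ hx)⟩
    rw [h1, Finset.card_insert_of_notMem h, pow_succ]
    ring

lemma chi_symmDiff_mem {r : ℕ} {A : Finset (Fin r)} {a : Fin r} (ha : a ∈ A)
    (S : Finset (Fin r)) : chi A (symmDiff S {a}) = -chi A S := by
  have h1 : A ∩ symmDiff S {a} = symmDiff (A ∩ S) {a} := by
    ext x
    simp only [Finset.mem_inter, Finset.mem_symmDiff, Finset.mem_singleton]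
    constructor
    · rintro ⟨hxA, (⟨hxS, hxa⟩ | ⟨rfl, hxS⟩)⟩
      · exact Or.inl ⟨⟨hxA, hxS⟩, fun h => hxa h⟩
      · exact Or.inr ⟨rfl, fun h => hxS h.2⟩
    · rintro (⟨⟨hxA, hxS⟩, hxa⟩ | ⟨rfl, hx⟩)
      · exact ⟨hxA, Or.inl ⟨hxS, hxa⟩⟩
      · exact ⟨ha, Or.inr ⟨rfl, fun h => hx ⟨ha, h⟩⟩⟩
  rw [chi, h1, neg_one_pow_symmDiff]; rfl

lemma chi_symmDiff_not_mem {r : ℕ} {A : Finset (Fin r)} {a : Fin r} (ha : a ∉ A)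
    (S : Finset (Fin r)) : chi A (symmDiff S {a}) = chi A S := by
  have h1 : A ∩ symmDiff S {a} = A ∩ S := by
    ext x
    simp only [Finset.mem_inter, Finset.mem_symmDiff, Finset.mem_singleton]
    constructor
    · rintro ⟨hxA, (⟨hxS, _⟩ | ⟨rfl, _⟩)⟩
      · exact ⟨hxA, hxS⟩
      · exact absurd hxA ha
    · rintro ⟨hxA, hxS⟩
      exact ⟨hxA, Or.inl ⟨hxS, fun h => ha (h ▸ hxA)⟩⟩
  rw [chi, h1, chi]

/-- Involution sum lemma. -/
lemma sum_eq_zero_of_involution {r : ℕ} {s : Finset (Finset (Fin r))}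
    {f : Finset (Fin r) → ℝ} {a : Fin r}
    (hmem : ∀ T ∈ s, symmDiff T {a} ∈ s)
    (hf : ∀ T, f (symmDiff T {a}) = -f T) :
    ∑ T ∈ s, f T = 0 := by
  refine Finset.sum_involution (fun T _ => symmDiff T {a})
    (fun T _ => by rw [hf]; ring)
    (fun T _ hT0 => ?_) (fun T hT => hmem T hT)
    (fun T _ => by exact symmDiff_symmDiff_cancel_right ..)
  intro h
  have : a ∈ symmDiff T {a} ↔ a ∈ T := by rw [h]
  simp [Finset.mem_symmDiff] at this

/-- Cardinality of the set of supersets of `P`. -/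
lemma card_filter_superset {r : ℕ} (P : Finset (Fin r)) :
    (Finset.univ.filter (fun T : Finset (Fin r) => P ⊆ T)).card = 2 ^ (r - P.card) := by
  have h := Finset.card_bij' (s := Finset.univ.filter (fun T : Finset (Fin r) => P ⊆ T))
    (t := Pᶜ.powerset) (fun T _ => T \ P) (fun U _ => U ∪ P)
    (fun T hT => by
      simp only [Finset.mem_powerset]
      intro x hx
      simp only [Finset.mem_sdiff] at hx
      simp [Finset.mem_compl, hx.2])
    (fun U hU => by
      simp only [Finset.mem_filter, Finset.mem_univ, true_and]
      exact Finset.subset_union_right)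
    (fun T hT => by
      simp only [Finset.mem_filter, Finset.mem_univ, true_and] at hT
      exact Finset.sdiff_union_of_subset hT)
    (fun U hU => by
      simp only [Finset.mem_powerset] at hU
      have : Disjoint U P := by
        rw [Finset.disjoint_left]
        intro x hx
        have := hU hx
        simp only [Finset.mem_compl] at this
        exact this
      show (U ∪ P) \ P = U
      rw [Finset.union_sdiff_distrib, Finset.sdiff_self, Finset.union_empty,
        Finset.sdiff_eq_self_of_disjoint this])
  rw [h, Finset.card_powerset, Finset.card_compl, Fintype.card_fin]

lemma sum_chi_superset_eq_zero {r : ℕ} {A P : Finset (Fin r)} {a : Fin r}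
    (haA : a ∈ A) (haP : a ∉ P) :
    ∑ T ∈ Finset.univ.filter (fun T : Finset (Fin r) => P ⊆ T), chi A T = 0 := by
  refine sum_eq_zero_of_involution (fun T hT => ?_) (fun T => chi_symmDiff_mem haA T)
  simp only [Finset.mem_filter, Finset.mem_univ, true_and] at hT ⊢
  intro x hx
  simp only [Finset.mem_symmDiff, Finset.mem_singleton]
  exact Or.inl ⟨hT hx, fun h => haP (h ▸ hx)⟩

lemma sum_chi_superset_self {r : ℕ} {A : Finset (Fin r)} (hA : A.card = 2) :
    ∑ T ∈ Finset.univ.filter (fun T : Finset (Fin r) => A ⊆ T), chi A T = 2 ^ (r - 2) := by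
  have : ∀ T ∈ Finset.univ.filter (fun T : Finset (Fin r) => A ⊆ T), chi A T = 1 := by
    intro T hT
    simp only [Finset.mem_filter, Finset.mem_univ, true_and] at hT
    rw [chi, Finset.inter_eq_left.2 hT, hA]
    norm_num
  rw [Finset.sum_congr rfl this, Finset.sum_const, card_filter_superset, hA, nsmul_eq_mul,
    mul_one]
  push_cast
  ring

lemma sum_choose_mul_chi {r : ℕ} {A : Finset (Fin r)} (hA : A.card = 2) (S : Finset (Fin r)) :
    ∑ T : Finset (Fin r), ((S ∩ T).card.choose 2 : ℝ) * chi A T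
      = if A ⊆ S then (2 : ℝ) ^ (r - 2) else 0 := by
  have key : ∀ T : Finset (Fin r), ((S ∩ T).card.choose 2 : ℝ)
      = ∑ P ∈ Finset.univ.powersetCard 2, if P ⊆ S ∩ T then (1 : ℝ) else 0 := by
    intro T
    have h1 : (S ∩ T).powersetCard 2
        = (Finset.univ.powersetCard 2).filter (fun P => P ⊆ S ∩ T) := by
      ext P
      simp only [Finset.mem_powersetCard, Finset.mem_filter, Finset.subset_univ, true_and]
      tauto
    have h2 : (S ∩ T).card.choose 2 = ((S ∩ T).powersetCard 2).card :=
      (Finset.card_powersetCard 2 (S ∩ T)).symm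
    rw [h2, h1, Finset.card_filter]
    push_cast
    rfl
  calc ∑ T : Finset (Fin r), ((S ∩ T).card.choose 2 : ℝ) * chi A T
      = ∑ T : Finset (Fin r), ∑ P ∈ Finset.univ.powersetCard 2,
          (if P ⊆ S ∩ T then (1 : ℝ) else 0) * chi A T := by
        refine Finset.sum_congr rfl fun T _ => ?_
        rw [key T, Finset.sum_mul]
    _ = ∑ P ∈ Finset.univ.powersetCard 2, ∑ T : Finset (Fin r),
          (if P ⊆ S ∩ T then (1 : ℝ) else 0) * chi A T := Finset.sum_comm
    _ = ∑ P ∈ Finset.univ.powersetCard 2,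
          (if P ⊆ S then ∑ T ∈ Finset.univ.filter (fun T : Finset (Fin r) => P ⊆ T), chi A T
            else 0) := by
        refine Finset.sum_congr rfl fun P _ => ?_
        by_cases hPS : P ⊆ S
        · rw [if_pos hPS, Finset.sum_filter]
          exact Finset.sum_congr rfl fun T _ => by
            simp [Finset.subset_inter_iff, hPS, ite_mul]
        · rw [if_neg hPS]
          exact Finset.sum_eq_zero fun T _ => by
            simp [Finset.subset_inter_iff, hPS]
    _ = ∑ P ∈ Finset.univ.powersetCard 2,
          (if P = A ∧ A ⊆ S then (2 : ℝ) ^ (r - 2) else 0) := by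
        refine Finset.sum_congr rfl fun P hP => ?_
        have hP2 : P.card = 2 := (Finset.mem_powersetCard.1 hP).2
        by_cases hPA : P = A
        · subst hPA
          by_cases hAS : P ⊆ S
          · rw [if_pos hAS, sum_chi_superset_self hA, if_pos ⟨rfl, hAS⟩]
          · rw [if_neg hAS, if_neg (fun h : P = P ∧ P ⊆ S => hAS h.2)]
        · by_cases hPS : P ⊆ S
          · rw [if_pos hPS, if_neg (fun h : P = A ∧ A ⊆ S => hPA h.1)]
            have hns : ¬ A ⊆ P := fun hsub =>
              hPA ((Finset.eq_of_subset_of_card_le hsub (by omega)).symm)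
            obtain ⟨a, haA, haP⟩ := Finset.not_subset.1 hns
            exact sum_chi_superset_eq_zero haA haP
          · rw [if_neg hPS, if_neg (fun h : P = A ∧ A ⊆ S => hPA h.1)]
    _ = if A ⊆ S then (2 : ℝ) ^ (r - 2) else 0 := by
        have hAmem : A ∈ Finset.univ.powersetCard 2 :=
          Finset.mem_powersetCard.2 ⟨Finset.subset_univ A, hA⟩
        by_cases hAS : A ⊆ S
        · rw [if_pos hAS]
          have hc : ∀ P ∈ Finset.univ.powersetCard 2,
              (if P = A ∧ A ⊆ S then (2:ℝ)^(r-2) else 0)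
                = if P = A then (2:ℝ)^(r-2) else 0 := fun P _ => by simp [hAS]
          rw [Finset.sum_congr rfl hc,
            Finset.sum_ite_eq' (Finset.univ.powersetCard 2) A (fun _ => (2:ℝ)^(r-2)),
            if_pos hAmem]
        · rw [if_neg hAS]
          exact Finset.sum_eq_zero fun P _ => by rw [if_neg (fun h => hAS h.2)]

/-- Complement bijection on `Finset (Fin r)`. -/
def complEquiv (r : ℕ) : Finset (Fin r) ≃ Finset (Fin r) :=
  ⟨fun T => Tᶜ, fun T => Tᶜ, fun T => compl_compl T, fun T => compl_compl T⟩

lemma chi_compl {r : ℕ} {A : Finset (Fin r)} (hA : A.card = 2) (T : Finset (Fin r)) :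
    chi A Tᶜ = chi A T := by
  have h1 : (A ∩ T).card + (A ∩ Tᶜ).card = 2 := by
    rw [← hA]
    have : A ∩ Tᶜ = A \ T := by
      ext x; simp [Finset.mem_inter, Finset.mem_sdiff, Finset.mem_compl]
    rw [this, Finset.card_inter_add_card_sdiff]
  unfold chi
  have h2 : (A ∩ T).card ≤ 2 := by omega
  interval_cases h : (A ∩ T).card <;>
    · have h3 : (A ∩ Tᶜ).card = 2 - (A ∩ T).card := by omega
      rw [h] at h3
      norm_num [h3]

lemma sum_choose_compl_mul_chi {r : ℕ} {A : Finset (Fin r)} (hA : A.card = 2)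
    (S : Finset (Fin r)) :
    ∑ T : Finset (Fin r), ((Sᶜ ∩ Tᶜ).card.choose 2 : ℝ) * chi A T
      = if A ⊆ Sᶜ then (2 : ℝ) ^ (r - 2) else 0 := by
  rw [← sum_choose_mul_chi hA Sᶜ]
  rw [← Equiv.sum_comp (complEquiv r)
    (fun T => ((Sᶜ ∩ T).card.choose 2 : ℝ) * chi A T)]
  refine Finset.sum_congr rfl fun T _ => ?_
  show _ = ((Sᶜ ∩ Tᶜ).card.choose 2 : ℝ) * chi A Tᶜ
  rw [chi_compl hA]

lemma mulVec_chi {r : ℕ} (hr : 3 ≤ r) {A : Finset (Fin r)} (hA : A.card = 2) :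
    (Mmat r).mulVec (chi A) = fun S => (2 : ℝ) ^ (r - 3) * (1 + chi A S) := by
  funext S
  have hmv : (Mmat r).mulVec (chi A) S = ∑ T : Finset (Fin r), Mmat r S T * chi A T := by
    simp [Matrix.mulVec, dotProduct]
  rw [hmv]
  have hsplit : ∀ T : Finset (Fin r), Mmat r S T * chi A T
      = ((S ∩ T).card.choose 2 : ℝ) * chi A T + ((Sᶜ ∩ Tᶜ).card.choose 2 : ℝ) * chi A T := by
    intro T; rw [Mmat]; ring
  rw [Finset.sum_congr rfl (fun T _ => hsplit T), Finset.sum_add_distrib,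
    sum_choose_mul_chi hA S, sum_choose_compl_mul_chi hA S]
  have hcard : (A ∩ S).card ≤ 2 := le_trans (Finset.card_le_card Finset.inter_subset_left) hA.le
  have hsub2 : A ⊆ S ↔ (A ∩ S).card = 2 := by
    constructor
    · intro h; rw [Finset.inter_eq_left.2 h]; exact hA
    · intro h
      rw [← Finset.inter_eq_left]
      exact Finset.eq_of_subset_of_card_le (Finset.inter_subset_left : A ∩ S ⊆ A)
        (by omega)
  have hsub0 : A ⊆ Sᶜ ↔ (A ∩ S).card = 0 := by
    rw [Finset.card_eq_zero]
    constructor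
    · intro h
      rw [Finset.eq_empty_iff_forall_notMem]
      rintro x hx
      rw [Finset.mem_inter] at hx
      exact (Finset.mem_compl.1 (h hx.1)) hx.2
    · intro h x hx
      rw [Finset.mem_compl]
      intro hxS
      exact (Finset.eq_empty_iff_forall_notMem.1 h x) (Finset.mem_inter.2 ⟨hx, hxS⟩)
  have hre : r - 2 = (r - 3) + 1 := by omega
  unfold chi
  by_cases h2 : A ⊆ S
  · have hc := hsub2.1 h2
    have h0 : ¬ A ⊆ Sᶜ := by rw [hsub0]; omega
    rw [if_pos h2, if_neg h0, hc, hre, pow_succ]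
    norm_num
  · by_cases h0 : A ⊆ Sᶜ
    · have hc := hsub0.1 h0
      rw [if_neg h2, if_pos h0, hc, hre, pow_succ]
      norm_num
    · have hc : (A ∩ S).card = 1 := by
        have hn2 : (A ∩ S).card ≠ 2 := fun h => h2 (hsub2.2 h)
        have hn0 : (A ∩ S).card ≠ 0 := fun h => h0 (hsub0.2 h)
        omega
      rw [if_neg h2, if_neg h0, hc]
      norm_num

lemma sum_chi_mul_chi_self {r : ℕ} (A : Finset (Fin r)) :
    ∑ S : Finset (Fin r), chi A S * chi A S = (2 : ℝ) ^ r := by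
  have h1 : ∀ S : Finset (Fin r), chi A S * chi A S = 1 := by
    intro S
    unfold chi
    rw [← pow_add]
    exact Even.neg_one_pow (Even.add_self _)
  rw [Finset.sum_congr rfl (fun S _ => h1 S), Finset.sum_const, Finset.card_univ,
    Fintype.card_finset, Fintype.card_fin, nsmul_eq_mul, mul_one]
  push_cast
  ring

lemma sum_chi_mul_chi_ne {r : ℕ} {A B : Finset (Fin r)} (h : A ≠ B) :
    ∑ S : Finset (Fin r), chi A S * chi B S = 0 := by
  obtain ⟨a, ha⟩ : ∃ a, (a ∈ A ∧ a ∉ B) ∨ (a ∈ B ∧ a ∉ A) := by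
    by_contra hc
    push_neg at hc
    apply h
    ext x
    have := hc x
    tauto
  rcases ha with ⟨haA, haB⟩ | ⟨haB, haA⟩
  · exact sum_eq_zero_of_involution (a := a) (fun T _ => Finset.mem_univ _)
      (fun T => by rw [chi_symmDiff_mem haA, chi_symmDiff_not_mem haB]; ring)
  · exact sum_eq_zero_of_involution (a := a) (fun T _ => Finset.mem_univ _)
      (fun T => by rw [chi_symmDiff_mem haB, chi_symmDiff_not_mem haA]; ring)

/-- For `r ≥ 4`, the dimension of the eigenspace of `M_r` associated with
the eigenvalue `2^(r−3)` is at least `C(r, 2) − 1`. -/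
theorem eigenspace_dim_ge_of_eigenvalue_two_pow (r : ℕ) (hr : 4 ≤ r) :
    r.choose 2 - 1 ≤
      Module.finrank ℝ (LinearMap.ker
        (Mmat r - ((2 : ℝ) ^ (r - 3)) •
          (1 : Matrix (Finset (Fin r)) (Finset (Fin r)) ℝ)).mulVecLin) := by
  have hr3 : 3 ≤ r := by omega
  haveI : NeZero r := ⟨by omega⟩
  have h01 : (0 : Fin r) ≠ (1 : Fin r) := by
    intro h
    have h2 := congrArg Fin.val h
    rw [Fin.val_zero, Fin.val_one', Nat.mod_eq_of_lt (by omega)] at h2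
    exact absurd h2 (by omega)
  set A0 : Finset (Fin r) := {0, 1} with hA0def
  have hA0card : A0.card = 2 := by
    rw [hA0def, Finset.card_insert_of_notMem (by simp [h01]), Finset.card_singleton]
  set N := Mmat r - ((2 : ℝ) ^ (r - 3)) •
      (1 : Matrix (Finset (Fin r)) (Finset (Fin r)) ℝ) with hN
  set K := LinearMap.ker N.mulVecLin with hK
  -- the index type
  let ι := {A : Finset (Fin r) // A.card = 2 ∧ A ≠ A0}
  let u : ι → (Finset (Fin r) → ℝ) := fun i => (fun S => chi i.1 S - chi A0 S)
  -- each `u i` is in the kernel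
  have hker : ∀ i : ι, u i ∈ K := by
    rintro ⟨A, hA2, hAne⟩
    rw [hK, LinearMap.mem_ker, Matrix.mulVecLin_apply]
    have hu : u ⟨A, hA2, hAne⟩ = chi A - chi A0 := rfl
    rw [hu, hN, Matrix.sub_mulVec]
    funext S
    simp only [Matrix.mulVec_sub, Matrix.smul_mulVec, Matrix.one_mulVec,
      mulVec_chi hr3 hA2, mulVec_chi hr3 hA0card, Pi.sub_apply, Pi.smul_apply,
      smul_eq_mul, Pi.zero_apply]
    ring
  -- linear independence
  have hLI : LinearIndependent ℝ u := by
    rw [Fintype.linearIndependent_iff]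
    intro g hg
    rintro ⟨B, hB2, hBne⟩
    have hS : ∀ S, ∑ i : ι, g i * (chi i.1 S - chi A0 S) = 0 := by
      intro S
      have := congrFun hg S
      simpa [u] using this
    have key : (0 : ℝ) = g ⟨B, hB2, hBne⟩ * 2 ^ r := by
      calc (0 : ℝ) = ∑ S : Finset (Fin r),
            (∑ i : ι, g i * (chi i.1 S - chi A0 S)) * chi B S := by
            refine (Finset.sum_eq_zero fun S _ => ?_).symm
            rw [hS S, zero_mul]
        _ = ∑ i : ι, ∑ S : Finset (Fin r), g i * (chi i.1 S - chi A0 S) * chi B S := by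
            rw [Finset.sum_comm]
            exact Finset.sum_congr rfl fun S _ => by rw [Finset.sum_mul]
        _ = ∑ i : ι, g i * ((∑ S : Finset (Fin r), chi i.1 S * chi B S)
              - ∑ S : Finset (Fin r), chi A0 S * chi B S) := by
            refine Finset.sum_congr rfl fun i _ => ?_
            rw [show (∑ S : Finset (Fin r), g i * (chi i.1 S - chi A0 S) * chi B S)
                = g i * ∑ S : Finset (Fin r),
                    (chi i.1 S * chi B S - chi A0 S * chi B S) by
              rw [Finset.mul_sum]; exact Finset.sum_congr rfl fun S _ => by ring]
            rw [Finset.sum_sub_distrib]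
        _ = ∑ i : ι, (if i = ⟨B, hB2, hBne⟩ then g i * 2 ^ r else 0) := by
            refine Finset.sum_congr rfl fun i _ => ?_
            rw [sum_chi_mul_chi_ne (Ne.symm hBne), sub_zero]
            by_cases hiB : i = ⟨B, hB2, hBne⟩
            · subst hiB
              rw [if_pos rfl, sum_chi_mul_chi_self]
            · rw [if_neg hiB,
                sum_chi_mul_chi_ne (fun h : i.1 = B => hiB (Subtype.ext h)), mul_zero]
        _ = g ⟨B, hB2, hBne⟩ * 2 ^ r := by
            rw [Finset.sum_ite_eq' Finset.univ (⟨B, hB2, hBne⟩ : ι)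
              (fun i => g i * 2 ^ r), if_pos (Finset.mem_univ _)]
    rcases mul_eq_zero.mp key.symm with h | h
    · exact h
    · exact absurd h (by positivity)
  have hcard : Fintype.card ι = r.choose 2 - 1 := by
    rw [Fintype.card_subtype]
    have h1 : Finset.univ.filter (fun A : Finset (Fin r) => A.card = 2 ∧ A ≠ A0)
        = (Finset.univ.filter (fun A : Finset (Fin r) => A.card = 2)).erase A0 := by
      ext A
      simp only [Finset.mem_filter, Finset.mem_univ, true_and, Finset.mem_erase]
      tauto
    rw [h1, Finset.card_erase_of_mem (by simp [hA0card])]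
    congr 1
    have h2 : Finset.univ.filter (fun A : Finset (Fin r) => A.card = 2)
        = Finset.univ.powersetCard 2 := by
      ext A
      simp [Finset.mem_powersetCard, Finset.subset_univ]
    rw [h2, Finset.card_powersetCard, Finset.card_univ, Fintype.card_fin]
  let v : ι → K := fun i => ⟨u i, hker i⟩
  have hLIv : LinearIndependent ℝ v := by
    apply LinearIndependent.of_comp K.subtype
    exact hLI
  calc r.choose 2 - 1 = Fintype.card ι := hcard.symm
    _ ≤ Module.finrank ℝ K := hLIv.fintype_card_le_finrank
end
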